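/- Every Shapley cost sharing game possesses a pure Nash equilibrium, i.e., there exists a strategy vector P such that C_i(P) ≤ C_i(P_{−i}, Q_i) for every player i and every Q_i ∈ 𝒫_i. Moreover, any strategy vector minimizing the potential Φ(P) = Σ_{r ∈ R} Σ_{∅ ≠ T ⊆ P^r} ((|P^r| − |T|)! (|T| − 1)! / |P^r|!) · C^r(T) is a pure Nash equilibrium. -/

import Mathlib

open Finset

def preSet {N : Type*} [DecidableEq N] (S : Finset N)
    (π : {x // x ∈ S} ≃ Fin S.card) (i : {x // x ∈ S}) : Finset N :=
  (S.attach.filter (fun j => π j < π i)).image Subtype.val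

noncomputable def shapley {N : Type*} [DecidableEq N]
    (C : Finset N → ℝ) (S : Finset N) (i : N) : ℝ :=
  if hi : i ∈ S then
    (1 / (Nat.factorial S.card : ℝ)) *
      ∑ π : {x // x ∈ S} ≃ Fin S.card,
        (C (preSet S π ⟨i, hi⟩ ∪ {i}) - C (preSet S π ⟨i, hi⟩))
  else 0

/-- `users P r = P^r = {i : r ∈ P_i}`, the set of players using resource `r`. -/
def users {n : ℕ} {R : Type*} [DecidableEq R]
    (P : Fin n → Finset R) (r : R) : Finset (Fin n) :=
  Finset.univ.filter (fun i => r ∈ P i)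

/-- The private cost of player `i` under Shapley cost sharing:
`C_i(P) = Σ_{r ∈ P_i} φ_i(C^r, P^r)`. -/
noncomputable def privCost {n : ℕ} {R : Type*} [DecidableEq R]
    (Cr : R → Finset (Fin n) → ℝ) (P : Fin n → Finset R) (i : Fin n) : ℝ :=
  ∑ r ∈ P i, shapley (Cr r) (users P r) i

/-- The social cost `C(P) = Σ_{r ∈ R} C^r(P^r)`. -/
noncomputable def socCost {n : ℕ} {R : Type*} [Fintype R] [DecidableEq R]
    (Cr : R → Finset (Fin n) → ℝ) (P : Fin n → Finset R) : ℝ :=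
  ∑ r : R, Cr r (users P r)

/-- The Shapley potential
`Φ(P) = Σ_{r ∈ R} Σ_{∅ ≠ T ⊆ P^r} ((|P^r|-|T|)!(|T|-1)!/|P^r|!) · C^r(T)`. -/
noncomputable def pot {n : ℕ} {R : Type*} [Fintype R] [DecidableEq R]
    (Cr : R → Finset (Fin n) → ℝ) (P : Fin n → Finset R) : ℝ :=
  ∑ r : R, ∑ T ∈ (users P r).powerset.filter (fun T => T.Nonempty),
    ((Nat.factorial ((users P r).card - T.card) : ℝ) *
        (Nat.factorial (T.card - 1) : ℝ) / (Nat.factorial (users P r).card : ℝ)) *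
      Cr r T

/-- `P` is a pure Nash equilibrium of the Shapley cost sharing game. -/
def isPNE {n : ℕ} {R : Type*} [DecidableEq R]
    (Strat : Fin n → Set (Finset R)) (Cr : R → Finset (Fin n) → ℝ)
    (P : Fin n → Finset R) : Prop :=
  (∀ i, P i ∈ Strat i) ∧
    ∀ i, ∀ Q ∈ Strat i, privCost Cr P i ≤ privCost Cr (Function.update P i Q) i

/-- `H_k`, the `k`-th harmonicNum number. -/
noncomputable def harmonicNum (k : ℕ) : ℝ := ∑ l ∈ Finset.Icc 1 k, (1 / (l : ℝ))

set_option linter.unusedSectionVars false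
set_option maxHeartbeats 1000000

section Counting
variable {α : Type*} [Fintype α] [DecidableEq α]

lemma val_eq_card_below {s : ℕ} (π : α ≃ Fin s) (I : α) :
    ((π I : Fin s) : ℕ) = Fintype.card {j : α // π j < π I} := by
  have h : Fintype.card {j : α // π j < π I} = Fintype.card {m : Fin s // m < π I} :=
    Fintype.card_congr (π.subtypeEquiv (fun j => Iff.rfl))
  rw [h, Fintype.card_subtype]
  have : Finset.univ.filter (fun m : Fin s => m < π I) = Finset.Iio (π I) := by
    ext m; simp
  rw [this, Fin.card_Iio]

variable {s k m : ℕ} {p : α → Prop} [DecidablePred p] {I : α}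

def buildPerm (hI : ¬ p I) (hs : k + m + 1 = s)
    (e1 : {j // p j} ≃ Fin k) (e2 : {j // ¬ p j ∧ j ≠ I} ≃ Fin m) : α ≃ Fin s where
  toFun j :=
    if h : p j then ⟨e1 ⟨j, h⟩, by have := (e1 ⟨j, h⟩).2; omega⟩
    else if h' : j = I then ⟨k, by omega⟩
    else ⟨(e2 ⟨j, h, h'⟩ : ℕ) + k + 1, by have := (e2 ⟨j, h, h'⟩).2; omega⟩
  invFun v :=
    if h : (v : ℕ) < k then (e1.symm ⟨v, h⟩ : {j // p j}).1
    else if h' : (v : ℕ) = k then I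
    else (e2.symm ⟨(v : ℕ) - k - 1, by have := v.2; omega⟩ : {j // ¬ p j ∧ j ≠ I}).1
  left_inv j := by
    dsimp only
    by_cases h : p j
    · rw [dif_pos h]
      split_ifs with h1 h2
      · simp
      · exact absurd ((e1 ⟨j, h⟩).2) (by simpa using h1)
      · exact absurd ((e1 ⟨j, h⟩).2) (by simpa using h1)
    · by_cases h' : j = I
      · rw [dif_neg h, dif_pos h']
        split_ifs with h1 h2
        · simp at h1
        · exact h'.symm
        · simp at h2
      · rw [dif_neg h, dif_neg h']
        have h2 := (e2 ⟨j, h, h'⟩).2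
        split_ifs with h3 h4
        · simp only [Fin.val_mk] at h3; omega
        · simp only [Fin.val_mk] at h4; omega
        · have hw : ∀ (w : Fin m), w = e2 ⟨j, h, h'⟩ → (e2.symm w : α) = j := by
            intro w hww; rw [hww, Equiv.symm_apply_apply]
          apply hw
          apply Fin.ext
          simp only [Fin.val_mk]
          omega
  right_inv v := by
    dsimp only
    by_cases h : (v : ℕ) < k
    · rw [dif_pos h, dif_pos (e1.symm ⟨v, h⟩).2]
      apply Fin.ext; simp
    · by_cases h' : (v : ℕ) = k
      · rw [dif_neg h, dif_pos h', dif_neg hI, dif_pos rfl]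
        apply Fin.ext; simp [h'.symm]
      · rw [dif_neg h, dif_neg h']
        set x := e2.symm ⟨(v : ℕ) - k - 1, by have := v.2; omega⟩ with hx
        rw [dif_neg x.2.1, dif_neg x.2.2]
        simp only [Subtype.coe_eta, hx, Equiv.apply_symm_apply]
        apply Fin.ext
        simp only [Fin.val_mk]
        have := v.2
        omega

lemma card_fiber (hI : ¬ p I) (hsum : k + m + 1 = s) (hk : Fintype.card {j // p j} = k)
    (hm : Fintype.card {j // ¬ p j ∧ j ≠ I} = m) :
    Fintype.card {π : α ≃ Fin s // ∀ j, π j < π I ↔ p j}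
      = k.factorial * m.factorial := by
  have hπI : ∀ (π : α ≃ Fin s), (∀ j, π j < π I ↔ p j) → ((π I : Fin s) : ℕ) = k := by
    intro π hπ
    rw [val_eq_card_below]
    rw [← hk]
    exact Fintype.card_congr (Equiv.subtypeEquivRight hπ)
  have hjk : ∀ (π : α ≃ Fin s) (hπ : ∀ j, π j < π I ↔ p j) (j : α), p j →
      ((π j : Fin s) : ℕ) < k := by
    intro π hπ j hj
    have h := (hπ j).2 hj
    rw [Fin.lt_def, hπI π hπ] at h
    exact h
  have hjk' : ∀ (π : α ≃ Fin s) (hπ : ∀ j, π j < π I ↔ p j) (j : α), ¬ p j → j ≠ I →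
      k < ((π j : Fin s) : ℕ) := by
    intro π hπ j hj hj'
    have h1 : ¬ (π j < π I) := fun h => hj ((hπ j).1 h)
    have h2 : π j ≠ π I := fun h => hj' (π.injective h)
    rw [Fin.lt_def, hπI π hπ] at h1
    have h3 : ((π j : Fin s) : ℕ) ≠ k := fun h => h2 (Fin.ext (h.trans (hπI π hπ).symm))
    omega
  let E : {π : α ≃ Fin s // ∀ j, π j < π I ↔ p j} ≃
      ({j // p j} ≃ Fin k) × ({j // ¬ p j ∧ j ≠ I} ≃ Fin m) :=
    { toFun := fun π =>
        (⟨fun j => ⟨(π.1 j.1 : Fin s), hjk π.1 π.2 j.1 j.2⟩,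
          fun v => ⟨π.1.symm ⟨v.1, by omega⟩, by
            rw [← π.2]
            rw [Fin.lt_def, hπI π.1 π.2]
            simp only [Equiv.apply_symm_apply, Fin.val_mk]
            exact v.2⟩,
          fun j => by apply Subtype.ext; simp,
          fun v => by apply Fin.ext; simp⟩,
        ⟨fun j => ⟨(π.1 j.1 : Fin s) - (k + 1), by
            have h1 := hjk' π.1 π.2 j.1 j.2.1 j.2.2
            have h2 := (π.1 j.1).2
            omega⟩,
          fun v => ⟨π.1.symm ⟨v.1 + k + 1, by omega⟩, by
            constructor
            · intro hp
              have := hjk π.1 π.2 _ hp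
              simp only [Equiv.apply_symm_apply, Fin.val_mk] at this
              omega
            · intro hEq
              have h5 : ((π.1 (π.1.symm ⟨v.1 + k + 1, by omega⟩) : Fin s) : ℕ) = k := by
                rw [hEq]; exact hπI π.1 π.2
              simp only [Equiv.apply_symm_apply, Fin.val_mk] at h5
              omega⟩,
          fun j => by
            apply Subtype.ext
            have h1 := hjk' π.1 π.2 j.1 j.2.1 j.2.2
            have heq : (⟨((π.1 j.1 : Fin s) : ℕ) - (k + 1) + k + 1, by
                have := (π.1 j.1).2; omega⟩ : Fin s) = π.1 j.1 := by
              apply Fin.ext; simp only [Fin.val_mk]; omega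
            simp only [heq, Equiv.symm_apply_apply],
          fun v => by
            apply Fin.ext
            simp only [Equiv.apply_symm_apply, Fin.val_mk]
            omega⟩)
      invFun := fun E => ⟨buildPerm hI hsum E.1 E.2, by
        intro j
        have hEI : (buildPerm hI hsum E.1 E.2) I = ⟨k, by omega⟩ := by
          show (if h : p I then _ else if h' : I = I then (⟨k, by omega⟩ : Fin s) else _) = _
          rw [dif_neg hI, dif_pos rfl]
        rw [hEI]
        show (if h : p j then _ else if h' : j = I then (⟨k, by omega⟩ : Fin s) else _) < _ ↔ p j
        by_cases h : p j
        · rw [dif_pos h]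
          simp only [Fin.mk_lt_mk]
          exact ⟨fun _ => h, fun _ => (E.1 ⟨j, h⟩).2⟩
        · by_cases h' : j = I
          · rw [dif_neg h, dif_pos h']
            simp [h]
          · rw [dif_neg h, dif_neg h']
            simp only [Fin.mk_lt_mk]
            constructor
            · omega
            · intro hp; exact absurd hp h⟩
      left_inv := fun π => by
        apply Subtype.ext
        apply Equiv.ext
        intro j
        show (if h : p j then _ else if h' : j = I then (⟨k, by omega⟩ : Fin s) else _) = π.1 j
        by_cases h : p j
        · rw [dif_pos h]
          exact Fin.ext rfl
        · by_cases h' : j = I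
          · rw [dif_neg h, dif_pos h', h']
            exact (Fin.ext (hπI π.1 π.2)).symm
          · rw [dif_neg h, dif_neg h']
            apply Fin.ext
            have := hjk' π.1 π.2 j h h'
            show ((π.1 j : Fin s) : ℕ) - (k + 1) + k + 1 = ((π.1 j : Fin s) : ℕ)
            omega
      right_inv := fun Ep => by
        apply Prod.ext
        · apply Equiv.ext
          intro j
          apply Fin.ext
          show (((buildPerm hI hsum Ep.1 Ep.2) j.1 : Fin s) : ℕ) = _
          show (((if h : p j.1 then _ else if _ : j.1 = I then (⟨k, by omega⟩ : Fin s) else _) : Fin s) : ℕ) = _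
          rw [dif_pos j.2]
        · apply Equiv.ext
          intro j
          apply Fin.ext
          show (((buildPerm hI hsum Ep.1 Ep.2) j.1 : Fin s) : ℕ) - (k + 1) = _
          show (((if _ : p j.1 then _ else if _ : j.1 = I then (⟨k, by omega⟩ : Fin s) else _) : Fin s) : ℕ) - (k + 1) = _
          rw [dif_neg j.2.1, dif_neg j.2.2]
          simp only [Fin.val_mk, Subtype.coe_eta]
          omega }
  rw [Fintype.card_congr E, Fintype.card_prod,
    Fintype.card_equiv (Fintype.equivFinOfCardEq hk),
    Fintype.card_equiv (Fintype.equivFinOfCardEq hm), hk, hm]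

end Counting

section Aux
variable {N : Type*} [DecidableEq N]


lemma mem_preSet {S : Finset N} {π : {x // x ∈ S} ≃ Fin S.card} {I : {x // x ∈ S}} {v : N} :
    v ∈ preSet S π I ↔ ∃ h : v ∈ S, π ⟨v, h⟩ < π I := by
  simp only [preSet, Finset.mem_image, Finset.mem_filter, Finset.mem_attach, true_and]
  constructor
  · rintro ⟨j, hj, rfl⟩
    exact ⟨j.2, hj⟩
  · rintro ⟨h, hlt⟩
    exact ⟨⟨v, h⟩, hlt, rfl⟩

lemma preSet_eq_iff {S : Finset N} {π : {x // x ∈ S} ≃ Fin S.card} {i : N} (hi : i ∈ S)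
    {A : Finset N} (hA : A ⊆ S) :
    preSet S π ⟨i, hi⟩ = A ↔ ∀ j : {x // x ∈ S}, (π j < π ⟨i, hi⟩ ↔ j.val ∈ A) := by
  constructor
  · intro h j
    rw [← h, mem_preSet]
    constructor
    · intro hlt; exact ⟨j.2, hlt⟩
    · rintro ⟨hmem, hlt⟩; exact hlt
  · intro h
    ext v
    rw [mem_preSet]
    constructor
    · rintro ⟨hv, hlt⟩; exact (h ⟨v, hv⟩).1 hlt
    · intro hv; exact ⟨hA hv, (h ⟨v, hA hv⟩).2 hv⟩

lemma card_filter_preSet (S : Finset N) {i : N} (hi : i ∈ S) {A : Finset N}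
    (hA : A ⊆ S.erase i) :
    (Finset.univ.filter fun π : {x // x ∈ S} ≃ Fin S.card => preSet S π ⟨i, hi⟩ = A).card
      = A.card.factorial * (S.card - 1 - A.card).factorial := by
  classical
  have hAS : A ⊆ S := hA.trans (Finset.erase_subset _ _)
  have hiA : i ∉ A := fun h => (Finset.mem_erase.1 (hA h)).1 rfl
  have hcard : A.card ≤ S.card - 1 := by
    have := Finset.card_le_card hA
    rwa [Finset.card_erase_of_mem hi] at this
  have hS1 : 1 ≤ S.card := Finset.card_pos.2 ⟨i, hi⟩
  rw [← Fintype.card_subtype]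
  have e := Equiv.subtypeEquivRight
    (fun π : {x // x ∈ S} ≃ Fin S.card => (preSet_eq_iff hi hAS (π := π)))
  rw [Fintype.card_congr e]
  have hk : Fintype.card {j : {x // x ∈ S} // j.val ∈ A} = A.card := by
    rw [← Fintype.card_coe A]
    exact Fintype.card_congr
      ⟨fun j => ⟨j.1.1, j.2⟩, fun x => ⟨⟨x.1, hAS x.2⟩, x.2⟩, fun j => rfl, fun x => rfl⟩
  have hm : Fintype.card {j : {x // x ∈ S} // ¬ j.val ∈ A ∧ j ≠ ⟨i, hi⟩}
      = S.card - 1 - A.card := by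
    have hsub : A ⊆ S.erase i := hA
    have hcardB : ((S.erase i) \ A).card = S.card - 1 - A.card := by
      rw [Finset.card_sdiff_of_subset hsub, Finset.card_erase_of_mem hi]
    rw [← hcardB, ← Fintype.card_coe]
    refine Fintype.card_congr ⟨fun j => ⟨j.1.1, ?_⟩, fun x => ⟨⟨x.1, ?_⟩, ?_, ?_⟩, fun j => rfl, fun x => rfl⟩
    · rw [Finset.mem_sdiff, Finset.mem_erase]
      refine ⟨⟨?_, j.1.2⟩, j.2.1⟩
      intro hji
      exact j.2.2 (Subtype.ext hji)
    · have := (Finset.mem_sdiff.1 x.2).1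
      exact Finset.mem_of_mem_erase this
    · exact (Finset.mem_sdiff.1 x.2).2
    · intro hx
      have := (Finset.mem_sdiff.1 x.2).1
      rw [Finset.mem_erase] at this
      exact this.1 (congrArg Subtype.val hx)
  have hsum : A.card + (S.card - 1 - A.card) + 1 = S.card := by omega
  have := card_fiber (α := {x // x ∈ S}) (s := S.card)
    (p := fun j : {x // x ∈ S} => j.val ∈ A) (I := ⟨i, hi⟩) hiA hsum hk hm
  exact this

end Aux

section Aux2
variable {N : Type*} [DecidableEq N]

lemma sum_preSet (S : Finset N) {i : N} (hi : i ∈ S) (g : Finset N → ℝ) :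
    ∑ π : {x // x ∈ S} ≃ Fin S.card, g (preSet S π ⟨i, hi⟩)
      = ∑ A ∈ (S.erase i).powerset,
          ((A.card.factorial * (S.card - 1 - A.card).factorial : ℕ) : ℝ) * g A := by
  classical
  have hmaps : ∀ π : {x // x ∈ S} ≃ Fin S.card, π ∈ (Finset.univ : Finset _) →
      preSet S π ⟨i, hi⟩ ∈ (S.erase i).powerset := by
    intro π _
    rw [Finset.mem_powerset]
    intro v hv
    rw [mem_preSet] at hv
    obtain ⟨hvS, hlt⟩ := hv
    rw [Finset.mem_erase]
    refine ⟨?_, hvS⟩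
    rintro rfl
    exact lt_irrefl _ hlt
  rw [← Finset.sum_fiberwise_of_maps_to hmaps (fun π => g (preSet S π ⟨i, hi⟩))]
  refine Finset.sum_congr rfl (fun A hA => ?_)
  have hA' : A ⊆ S.erase i := Finset.mem_powerset.1 hA
  calc ∑ π ∈ Finset.univ.filter (fun π : {x // x ∈ S} ≃ Fin S.card =>
          preSet S π ⟨i, hi⟩ = A), g (preSet S π ⟨i, hi⟩)
      = ∑ π ∈ Finset.univ.filter (fun π : {x // x ∈ S} ≃ Fin S.card =>
          preSet S π ⟨i, hi⟩ = A), g A := by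
        refine Finset.sum_congr rfl (fun π hπ => ?_)
        rw [(Finset.mem_filter.1 hπ).2]
    _ = ((A.card.factorial * (S.card - 1 - A.card).factorial : ℕ) : ℝ) * g A := by
        rw [Finset.sum_const, card_filter_preSet S hi hA', nsmul_eq_mul]

/-- The Hart–Mas-Colell potential of a cost function on a coalition. -/
noncomputable def FS (C : Finset N → ℝ) (S : Finset N) : ℝ :=
  ∑ T ∈ S.powerset.filter (fun T => T.Nonempty),
    ((Nat.factorial (S.card - T.card) : ℝ) *
        (Nat.factorial (T.card - 1) : ℝ) / (Nat.factorial S.card : ℝ)) * C T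

lemma FS_eq_powerset {C : Finset N → ℝ} (hC : C ∅ = 0) (S : Finset N) :
    FS C S = ∑ T ∈ S.powerset,
      ((Nat.factorial (S.card - T.card) : ℝ) *
          (Nat.factorial (T.card - 1) : ℝ) / (Nat.factorial S.card : ℝ)) * C T := by
  rw [FS, Finset.sum_filter]
  refine Finset.sum_congr rfl (fun T _ => ?_)
  by_cases h : T.Nonempty
  · rw [if_pos h]
  · rw [if_neg h, Finset.not_nonempty_iff_eq_empty.1 h, hC, mul_zero]

/-- Key coefficient identity. -/
lemma coeff_identity {s a : ℕ} (ha : 1 ≤ a) (has : a ≤ s - 1) (hs : 1 ≤ s) :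
    ((Nat.factorial (s - a) : ℝ) * (Nat.factorial (a - 1)) / (Nat.factorial s))
      - ((Nat.factorial (s - 1 - a) : ℝ) * (Nat.factorial (a - 1)) / (Nat.factorial (s - 1)))
      = -(((a.factorial * (s - 1 - a).factorial : ℕ) : ℝ) / (Nat.factorial s)) := by
  obtain ⟨b, rfl⟩ : ∃ b, a = b + 1 := ⟨a - 1, by omega⟩
  obtain ⟨m, rfl⟩ : ∃ m, s = b + m + 2 := ⟨s - b - 2, by omega⟩
  have h1 : b + m + 2 - (b + 1) = m + 1 := by omega
  have h2 : b + 1 - 1 = b := by omega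
  have h3 : b + m + 2 - 1 - (b + 1) = m := by omega
  have h4 : b + m + 2 - 1 = b + m + 1 := by omega
  rw [h1, h2, h3, h4]
  have hf1 : (Nat.factorial (m + 1) : ℝ) = (m + 1) * Nat.factorial m := by
    rw [Nat.factorial_succ]; push_cast; ring
  have hf2 : (Nat.factorial (b + m + 2) : ℝ) = (b + m + 2) * Nat.factorial (b + m + 1) := by
    rw [show b + m + 2 = (b + m + 1) + 1 from rfl, Nat.factorial_succ]; push_cast; ring
  have hf3 : (Nat.factorial (b + 1) : ℝ) = (b + 1) * Nat.factorial b := by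
    rw [Nat.factorial_succ]; push_cast; ring
  have hne1 : (Nat.factorial (b + m + 1) : ℝ) ≠ 0 := Nat.cast_ne_zero.2 (Nat.factorial_ne_zero _)
  have hne2 : ((b : ℝ) + m + 2) ≠ 0 := by positivity
  push_cast
  rw [hf1, hf2, hf3]
  field_simp
  ring

lemma shapley_FS {C : Finset N → ℝ} (hC : C ∅ = 0) {S : Finset N} {i : N} (hi : i ∈ S) :
    shapley C S i = FS C S - FS C (S.erase i) := by
  classical
  unfold shapley
  rw [dif_pos hi]
  have hS1 : 1 ≤ S.card := Finset.card_pos.2 ⟨i, hi⟩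
  have hiS' : i ∉ S.erase i := Finset.notMem_erase i S
  have hcardE : (S.erase i).card = S.card - 1 := Finset.card_erase_of_mem hi
  rw [sum_preSet S hi (fun T => C (T ∪ {i}) - C T)]
  rw [FS_eq_powerset hC, FS_eq_powerset hC]
  have hins : S = insert i (S.erase i) := (Finset.insert_erase hi).symm
  rw [show S.powerset = (insert i (S.erase i)).powerset by rw [← hins]]
  rw [Finset.sum_powerset_insert hiS']
  rw [hcardE]
  rw [Finset.mul_sum, ← Finset.sum_add_distrib, ← Finset.sum_sub_distrib]
  refine Finset.sum_congr rfl (fun A hA => ?_)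
  have hA' : A ⊆ S.erase i := Finset.mem_powerset.1 hA
  have hiA : i ∉ A := fun h => (Finset.mem_erase.1 (hA' h)).1 rfl
  have hAcard : A.card ≤ S.card - 1 := by
    have := Finset.card_le_card hA'
    omega
  have hinscard : (insert i A).card = A.card + 1 := Finset.card_insert_of_notMem hiA
  have hAins : A ∪ {i} = insert i A := by
    ext v; simp [or_comm]
  rw [hAins, hinscard]
  have h5 : S.card - (A.card + 1) = S.card - 1 - A.card := by omega
  have h6 : A.card + 1 - 1 = A.card := by omega
  rw [h5, h6]
  by_cases hAe : A = ∅
  · subst hAe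
    simp [hC]
    ring
  · have ha : 1 ≤ A.card := Finset.card_pos.2 (Finset.nonempty_of_ne_empty hAe)
    have key := coeff_identity (s := S.card) (a := A.card) ha hAcard hS1
    rw [show (1 / (Nat.factorial S.card : ℝ)) *
        (((A.card.factorial * (S.card - 1 - A.card).factorial : ℕ) : ℝ) * (C (insert i A) - C A))
      = ((A.card.factorial * (S.card - 1 - A.card).factorial : ℕ) : ℝ) / (Nat.factorial S.card) * C (insert i A)
        - ((A.card.factorial * (S.card - 1 - A.card).factorial : ℕ) : ℝ) / (Nat.factorial S.card) * C A from by ring]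
    rw [show ((Nat.factorial (S.card - A.card) : ℝ) * (Nat.factorial (A.card - 1)) / (Nat.factorial S.card)) * C A
        + ((Nat.factorial (S.card - 1 - A.card) : ℝ) * (Nat.factorial (A.card)) / (Nat.factorial S.card)) * C (insert i A)
        - ((Nat.factorial (S.card - 1 - A.card) : ℝ) * (Nat.factorial (A.card - 1)) / (Nat.factorial (S.card - 1))) * C A
      = ((Nat.factorial (S.card - 1 - A.card) : ℝ) * (Nat.factorial (A.card)) / (Nat.factorial S.card)) * C (insert i A)
        + (((Nat.factorial (S.card - A.card) : ℝ) * (Nat.factorial (A.card - 1)) / (Nat.factorial S.card))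
          - ((Nat.factorial (S.card - 1 - A.card) : ℝ) * (Nat.factorial (A.card - 1)) / (Nat.factorial (S.card - 1)))) * C A from by ring]
    rw [key]
    push_cast
    ring

end Aux2

section Game
variable {n : ℕ} {R : Type*} [Fintype R] [DecidableEq R]

lemma pot_eq_sum_FS (Cr : R → Finset (Fin n) → ℝ) (P : Fin n → Finset R) :
    pot Cr P = ∑ r : R, FS (Cr r) (users P r) := rfl

lemma privCost_eq (Cr : R → Finset (Fin n) → ℝ) (P : Fin n → Finset R) (i : Fin n) :
    privCost Cr P i = ∑ r : R, if r ∈ P i then shapley (Cr r) (users P r) i else 0 := by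
  unfold privCost
  rw [← Finset.sum_filter]
  congr 1
  ext r
  simp

lemma pot_update {Cr : R → Finset (Fin n) → ℝ} (hC0 : ∀ r, Cr r ∅ = 0)
    (P : Fin n → Finset R) (i : Fin n) (Q : Finset R) :
    pot Cr (Function.update P i Q) - pot Cr P
      = privCost Cr (Function.update P i Q) i - privCost Cr P i := by
  classical
  set P' := Function.update P i Q with hP'def
  have hP'i : P' i = Q := Function.update_self i Q P
  have husers_ne : ∀ (r : R) (j : Fin n), j ≠ i → (j ∈ users P' r ↔ j ∈ users P r) := by
    intro r j hj
    simp [users, hP'def, Function.update_of_ne hj]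
  have husers_i : ∀ r : R, (i ∈ users P' r ↔ r ∈ Q) := by
    intro r; simp [users, hP'def]
  have husers_i' : ∀ r : R, (i ∈ users P r ↔ r ∈ P i) := by
    intro r; simp [users]
  rw [pot_eq_sum_FS, pot_eq_sum_FS, privCost_eq, privCost_eq, hP'i,
    ← Finset.sum_sub_distrib, ← Finset.sum_sub_distrib]
  refine Finset.sum_congr rfl (fun r _ => ?_)
  by_cases hQ : r ∈ Q <;> by_cases hP : r ∈ P i
  · have hu : users P' r = users P r := by
      ext j
      by_cases hj : j = i
      · subst hj; rw [husers_i, husers_i']; exact iff_of_true hQ hP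
      · exact husers_ne r j hj
    rw [hu, if_pos hQ, if_pos hP]
    ring
  · have hiu : i ∉ users P r := fun h => hP ((husers_i' r).1 h)
    have hu : users P' r = insert i (users P r) := by
      ext j
      by_cases hj : j = i
      · subst hj; rw [husers_i r]; simp [hQ]
      · rw [husers_ne r j hj]; simp [Finset.mem_insert, hj]
    have hiu' : i ∈ users P' r := (husers_i r).2 hQ
    have herase : (users P' r).erase i = users P r := by
      rw [hu, Finset.erase_insert hiu]
    have h2 := shapley_FS (hC0 r) hiu'
    rw [herase] at h2
    rw [if_pos hQ, if_neg hP]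
    linarith
  · have hiu : i ∈ users P r := (husers_i' r).2 hP
    have hu : users P' r = (users P r).erase i := by
      ext j
      by_cases hj : j = i
      · subst hj; rw [husers_i r]; simp [hQ]
      · rw [husers_ne r j hj]; simp [Finset.mem_erase, hj]
    have h2 := shapley_FS (hC0 r) hiu
    rw [if_neg hQ, if_pos hP, hu]
    linarith
  · have hu : users P' r = users P r := by
      ext j
      by_cases hj : j = i
      · subst hj; rw [husers_i, husers_i']; exact iff_of_false hQ hP
      · exact husers_ne r j hj
    rw [hu, if_neg hQ, if_neg hP]
    ring

end Game

/-- Every Shapley cost sharing game has a pure Nash equilibrium; moreover any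
minimizer of the Shapley potential is a pure Nash equilibrium. -/
theorem shapley_pne_exists {n : ℕ} {R : Type*} [Fintype R] [DecidableEq R]
    (Strat : Fin n → Set (Finset R)) (Cr : R → Finset (Fin n) → ℝ)
    (hC0 : ∀ r, Cr r ∅ = 0)
    (hStrat : ∀ i, (Strat i).Nonempty) :
    (∃ P : Fin n → Finset R, isPNE Strat Cr P) ∧
      (∀ P : Fin n → Finset R, (∀ i, P i ∈ Strat i) →
        (∀ Q : Fin n → Finset R, (∀ i, Q i ∈ Strat i) → pot Cr P ≤ pot Cr Q) →
        isPNE Strat Cr P) := by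
  classical
  have part2 : ∀ P : Fin n → Finset R, (∀ i, P i ∈ Strat i) →
      (∀ Q : Fin n → Finset R, (∀ i, Q i ∈ Strat i) → pot Cr P ≤ pot Cr Q) →
      isPNE Strat Cr P := by
    intro P hP hmin
    refine ⟨hP, fun i Q hQ => ?_⟩
    have hfeas : ∀ j, Function.update P i Q j ∈ Strat j := by
      intro j
      by_cases hj : j = i
      · subst hj; rw [Function.update_self]; exact hQ
      · rw [Function.update_of_ne hj]; exact hP j
    have h1 := hmin _ hfeas
    have h2 := pot_update hC0 P i Q
    linarith
  refine ⟨?_, part2⟩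
  obtain ⟨P, hPmem, hPmin⟩ := Finset.exists_min_image
    ((Finset.univ : Finset (Fin n → Finset R)).filter (fun P => ∀ i, P i ∈ Strat i))
    (pot Cr)
    ⟨fun i => (hStrat i).choose,
      Finset.mem_filter.2 ⟨Finset.mem_univ _, fun i => (hStrat i).choose_spec⟩⟩
  exact ⟨P, part2 P (Finset.mem_filter.1 hPmem).2
    (fun Q hQ => hPmin Q (Finset.mem_filter.2 ⟨Finset.mem_univ _, hQ⟩))⟩
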